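/- The relation ≤^A of truth-table reducibility by Mealy machines is transitive: for languages L₁ ⊆ Σ*, L₂ ⊆ Δ*, L₃ ⊆ Θ* over finite nonempty alphabets, if L₁ ≤^A L₂ and L₂ ≤^A L₃, then L₁ ≤^A L₃. -/

import Mathlib

/-- A Mealy machine with oracle: finite state set `Q`, start state `q0`,
partial transition function `step`, output function `out`, and for each state `q`
a tuple of `numSuf q` query suffixes `suf q` together with a truth table `tt q`. -/
structure OracleMealy (α : Type) (β : Type) where
  Q : Type
  [fintypeQ : Fintype Q]
  q0 : Q
  step : Q → α → Option Q
  out : Q → α → List β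
  numSuf : Q → ℕ
  suf : (q : Q) → Fin (numSuf q) → List β
  tt : (q : Q) → (Fin (numSuf q) → Bool) → Bool

namespace OracleMealy

variable {α β : Type}

/-- Running the machine on input `w` from the start state, returning the final state
together with the string written on the oracle tape (`none` if a transition is undefined). -/
def run (M : OracleMealy α β) (w : List α) : Option (M.Q × List β) :=
  w.foldl
    (fun s a => s.bind fun qo => (M.step qo.1 a).map fun q' => (q', qo.2 ++ M.out qo.1 a))
    (some (M.q0, []))

open Classical in
/-- The machine `M` with oracle `L` accepts `w` iff the run on `w` is defined, ending in a
state `p` with output `o`, and the truth table of `p` applied to the answers of the oracle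
queries `o ++ M.suf p i ∈ L` yields `true`. -/
def Accepts (M : OracleMealy α β) (L : Set (List β)) (w : List α) : Prop :=
  ∃ p o, M.run w = some (p, o) ∧
    M.tt p (fun i => decide (o ++ M.suf p i ∈ L)) = true

end OracleMealy

/-- `L₁ ≤^A L₂`: truth-table reducibility by Mealy machines. -/
def MealyTTReducible (L₁ : Set (List α)) (L₂ : Set (List β)) : Prop :=
  ∃ M : OracleMealy α β, ∀ w : List α, w ∈ L₁ ↔ M.Accepts L₂ w

/-- The language `L_# = {0^n 1^n | n ≥ 1}` over the alphabet `{0,1}` (`false` = 0, `true` = 1). -/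
def Lsharp : Set (List Bool) :=
  {w | ∃ n : ℕ, 1 ≤ n ∧ w = List.replicate n false ++ List.replicate n true}

namespace OracleMealy

variable {α β γ : Type}

/-- One step on an option state/output pair. -/
def stepF (M : OracleMealy α β) : Option (M.Q × List β) → α → Option (M.Q × List β) :=
  fun s a => s.bind fun qo => (M.step qo.1 a).map fun q' => (q', qo.2 ++ M.out qo.1 a)

/-- Run from an arbitrary state. -/
def runFrom (M : OracleMealy α β) (q : M.Q) (w : List α) : Option (M.Q × List β) :=
  w.foldl M.stepF (some (q, []))

lemma run_eq (M : OracleMealy α β) (w : List α) : M.run w = M.runFrom M.q0 w := rfl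

lemma foldl_stepF_none (M : OracleMealy α β) (w : List α) :
    w.foldl M.stepF none = none := by
  induction w with
  | nil => rfl
  | cons a w ih => simpa [stepF] using ih

lemma foldl_stepF_shift (M : OracleMealy α β) (w : List α) :
    ∀ (q : M.Q) (o : List β),
      w.foldl M.stepF (some (q, o)) =
        (M.runFrom q w).map fun po => (po.1, o ++ po.2) := by
  induction w with
  | nil => intro q o; simp [runFrom]
  | cons a w ih =>
    intro q o
    cases h : M.step q a with
    | none =>
      simp [runFrom, List.foldl_cons, stepF, h, foldl_stepF_none]
    | some q' =>
      have hstep : ∀ o' : List β, M.stepF (some (q, o')) a = some (q', o' ++ M.out q a) := by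
        intro o'; simp [stepF, h]
      rw [runFrom, List.foldl_cons, List.foldl_cons, hstep, hstep]
      rw [ih q' (o ++ M.out q a), show w.foldl M.stepF (some (q', [] ++ M.out q a)) =
        (M.runFrom q' w).map fun po => (po.1, ([] ++ M.out q a) ++ po.2) from ih q' _]
      simp [Option.map_map, Function.comp_def, List.append_assoc]

lemma runFrom_append (M : OracleMealy α β) (q : M.Q) (u v : List α) :
    M.runFrom q (u ++ v) =
      (M.runFrom q u).bind fun po =>
        (M.runFrom po.1 v).map fun po' => (po'.1, po.2 ++ po'.2) := by
  rw [runFrom, List.foldl_append]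
  cases h : M.runFrom q u with
  | none =>
    rw [show u.foldl M.stepF (some (q, [])) = none from h]
    simp [foldl_stepF_none]
  | some po =>
    rw [show u.foldl M.stepF (some (q, [])) = some po from h]
    obtain ⟨p, o⟩ := po
    simp [foldl_stepF_shift]

/-- number of suffixes attached to an (optional) run result -/
def kOf (M : OracleMealy α β) : Option (M.Q × List β) → ℕ
  | some (p, _) => M.numSuf p
  | none => 0

def sufAux (M : OracleMealy α β) : (r : Option (M.Q × List β)) → Fin (M.kOf r) → List β
  | some (p, o) => fun j => o ++ M.suf p j
  | none => fun j => j.elim0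

def ttAux (M : OracleMealy α β) : (r : Option (M.Q × List β)) → (Fin (M.kOf r) → Bool) → Bool
  | some (p, _) => fun g => M.tt p g
  | none => fun _ => false

/-- The composition of two oracle Mealy machines. -/
noncomputable def comp (M1 : OracleMealy α β) (M2 : OracleMealy β γ) : OracleMealy α γ :=
  letI := M1.fintypeQ
  letI := M2.fintypeQ
  { Q := M1.Q × Option M2.Q
    q0 := (M1.q0, some M2.q0)
    step := fun pr a => (M1.step pr.1 a).map fun p' =>
      (p', pr.2.bind fun q => (M2.runFrom q (M1.out pr.1 a)).map Prod.fst)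
    out := fun pr a =>
      (pr.2.bind fun q => (M2.runFrom q (M1.out pr.1 a)).map Prod.snd).getD []
    numSuf := fun pr => match pr with
      | (_, none) => 0
      | (p, some q) =>
        Fintype.card (Σ i : Fin (M1.numSuf p), Fin (M2.kOf (M2.runFrom q (M1.suf p i))))
    suf := fun pr => match pr with
      | (_, none) => fun j => j.elim0
      | (p, some q) => fun j =>
        let x := (Fintype.equivFin
          (Σ i : Fin (M1.numSuf p), Fin (M2.kOf (M2.runFrom q (M1.suf p i))))).symm j
        M2.sufAux (M2.runFrom q (M1.suf p x.1)) x.2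
    tt := fun pr => match pr with
      | (p, none) => fun _ => M1.tt p (fun _ => false)
      | (p, some q) => fun g => M1.tt p (fun i =>
          M2.ttAux (M2.runFrom q (M1.suf p i)) (fun j =>
            g ((Fintype.equivFin
              (Σ i : Fin (M1.numSuf p), Fin (M2.kOf (M2.runFrom q (M1.suf p i))))) ⟨i, j⟩))) }

lemma comp_step (M1 : OracleMealy α β) (M2 : OracleMealy β γ) (p : M1.Q) (r : Option M2.Q)
    (a : α) :
    (M1.comp M2).step (p, r) a =
      (M1.step p a).map fun p' => (p', r.bind fun q => (M2.runFrom q (M1.out p a)).map Prod.fst) :=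
  rfl

lemma comp_out (M1 : OracleMealy α β) (M2 : OracleMealy β γ) (p : M1.Q) (r : Option M2.Q)
    (a : α) :
    (M1.comp M2).out (p, r) a =
      (r.bind fun q => (M2.runFrom q (M1.out p a)).map Prod.snd).getD [] :=
  rfl

lemma run_append (M : OracleMealy α β) (u v : List α) :
    M.run (u ++ v) =
      (M.run u).bind fun po =>
        (M.runFrom po.1 v).map fun po' => (po'.1, po.2 ++ po'.2) := by
  rw [run_eq, runFrom_append, ← run_eq]

lemma runFrom_singleton (M : OracleMealy α β) (q : M.Q) (a : α) :
    M.runFrom q [a] = (M.step q a).map fun q' => (q', M.out q a) := by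
  cases h : M.step q a <;> simp [runFrom, stepF, h]

lemma run_snoc (M : OracleMealy α β) (w : List α) (a : α) :
    M.run (w ++ [a]) =
      (M.run w).bind fun po => (M.step po.1 a).map fun p' => (p', po.2 ++ M.out po.1 a) := by
  rw [run_append]
  cases h : M.run w with
  | none => rfl
  | some po =>
    obtain ⟨p, o⟩ := po
    simp [runFrom_singleton]
    cases M.step p a <;> simp

/-- How a run of the composed machine relates to runs of the components. -/
lemma comp_run (M1 : OracleMealy α β) (M2 : OracleMealy β γ) (w : List α) :
    match M1.run w with
    | none => (M1.comp M2).run w = none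
    | some (p, o₁) =>
      match M2.run o₁ with
      | some (q2, o2) => (M1.comp M2).run w = some ((p, some q2), o2)
      | none => ∃ o, (M1.comp M2).run w = some ((p, none), o) := by
  induction w using List.reverseRecOn with
  | nil => exact rfl
  | append_singleton w a ih =>
    rw [run_snoc, run_snoc]
    cases h1 : M1.run w with
    | none =>
      simp only [h1] at ih ⊢
      rw [ih]
      simp
    | some po =>
      obtain ⟨p, o₁⟩ := po
      simp only [h1] at ih ⊢
      cases hs : M1.step p a with
      | none =>
        cases h2 : M2.run o₁ with
        | none =>
          rw [h2] at ih; obtain ⟨o, ho⟩ := ih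
          simp only [Option.bind_some, hs, Option.map_none]
          rw [show (M1.comp M2).run w = @some ((M1.comp M2).Q × List γ) ((p, none), o) from ho]
          simp [comp_step, hs]; rfl
        | some q2o2 =>
          obtain ⟨q2, o2⟩ := q2o2
          rw [h2] at ih
          simp only [Option.bind_some, hs, Option.map_none]
          rw [show (M1.comp M2).run w = @some ((M1.comp M2).Q × List γ) ((p, some q2), o2) from ih]
          simp [comp_step, hs]; rfl
      | some p' =>
        cases h2 : M2.run o₁ with
        | none =>
          rw [h2] at ih; obtain ⟨o, ho⟩ := ih
          have h2' : M2.run (o₁ ++ M1.out p a) = none := by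
            rw [run_append, h2]; rfl
          simp only [hs, Option.bind_some, Option.map_some, h2']
          refine ⟨o ++ [], ?_⟩
          rw [show (M1.comp M2).run w = @some ((M1.comp M2).Q × List γ) ((p, none), o) from ho]
          simp [comp_step, comp_out, hs]; rfl
        | some q2o2 =>
          obtain ⟨q2, o2⟩ := q2o2
          rw [h2] at ih
          cases hr : M2.runFrom q2 (M1.out p a) with
          | none =>
            have h2' : M2.run (o₁ ++ M1.out p a) = none := by
              rw [run_append, h2]; simp [hr]
            simp only [hs, Option.bind_some, Option.map_some, h2']
            refine ⟨o2 ++ [], ?_⟩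
            rw [show (M1.comp M2).run w = @some ((M1.comp M2).Q × List γ) ((p, some q2), o2) from ih]
            simp [comp_step, comp_out, hs, hr]; rfl
          | some q2o2' =>
            obtain ⟨q2', o2'⟩ := q2o2'
            have h2' : M2.run (o₁ ++ M1.out p a) = some (q2', o2 ++ o2') := by
              rw [run_append, h2]; simp [hr]
            simp only [hs, Option.bind_some, Option.map_some, h2']
            rw [show (M1.comp M2).run w = @some ((M1.comp M2).Q × List γ) ((p, some q2), o2) from ih]
            simp [comp_step, comp_out, hs, hr]; rfl

lemma comp_tt_some (M1 : OracleMealy α β) (M2 : OracleMealy β γ) (p : M1.Q) (q : M2.Q)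
    (g : Fin ((M1.comp M2).numSuf (p, some q)) → Bool) :
    (M1.comp M2).tt (p, some q) g = M1.tt p (fun i =>
      M2.ttAux (M2.runFrom q (M1.suf p i)) (fun j =>
        g ((Fintype.equivFin
          (Σ i : Fin (M1.numSuf p), Fin (M2.kOf (M2.runFrom q (M1.suf p i))))) ⟨i, j⟩))) :=
  rfl

lemma comp_tt_none (M1 : OracleMealy α β) (M2 : OracleMealy β γ) (p : M1.Q)
    (g : Fin ((M1.comp M2).numSuf (p, none)) → Bool) :
    (M1.comp M2).tt (p, none) g = M1.tt p (fun _ => false) :=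
  rfl

lemma comp_suf_some (M1 : OracleMealy α β) (M2 : OracleMealy β γ) (p : M1.Q) (q : M2.Q)
    (i : Fin (M1.numSuf p)) (j : Fin (M2.kOf (M2.runFrom q (M1.suf p i)))) :
    (M1.comp M2).suf (p, some q)
        ((Fintype.equivFin
          (Σ i : Fin (M1.numSuf p), Fin (M2.kOf (M2.runFrom q (M1.suf p i))))) ⟨i, j⟩) =
      M2.sufAux (M2.runFrom q (M1.suf p i)) j := by
  show M2.sufAux _ _ = _
  rw [Equiv.symm_apply_apply]

open Classical in
/-- The key query lemma: the answer to the oracle query `o₁ ++ s ∈ L₂` can be computed by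
continuing the run of `M2` on `s` and querying `L₃`. -/
lemma query_eq (M2 : OracleMealy β γ) (L₂ : Set (List β)) (L₃ : Set (List γ))
    (hM2 : ∀ u, u ∈ L₂ ↔ M2.Accepts L₃ u)
    {o₁ : List β} {q2 : M2.Q} {o2 : List γ} (h2 : M2.run o₁ = some (q2, o2)) (s : List β) :
    decide (o₁ ++ s ∈ L₂) =
      M2.ttAux (M2.runFrom q2 s)
        (fun j => decide (o2 ++ M2.sufAux (M2.runFrom q2 s) j ∈ L₃)) := by
  cases hr : M2.runFrom q2 s with
  | none =>
    have hrun : M2.run (o₁ ++ s) = none := by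
      rw [run_append, h2]; simp [hr]
    have : o₁ ++ s ∉ L₂ := by
      rw [hM2]; rintro ⟨pp, oo, hpo, -⟩; rw [hrun] at hpo; simp at hpo
    simp [this, ttAux]
  | some po =>
    obtain ⟨pi, oi⟩ := po
    have hrun : M2.run (o₁ ++ s) = some (pi, o2 ++ oi) := by
      rw [run_append, h2]; simp [hr]
    have hu : (o₁ ++ s ∈ L₂) ↔
        (M2.tt pi (fun j => decide ((o2 ++ oi) ++ M2.suf pi j ∈ L₃)) = true) := by
      rw [hM2]
      constructor
      · rintro ⟨pp, oo, hpo, htt⟩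
        rw [hrun] at hpo
        obtain ⟨rfl, rfl⟩ : pi = pp ∧ o2 ++ oi = oo := by
          simpa [Prod.ext_iff] using hpo
        exact htt
      · intro h; exact ⟨pi, o2 ++ oi, hrun, h⟩
    rw [decide_eq_decide.mpr hu]
    show _ = M2.tt pi _
    have hfun : (fun j => decide ((o2 ++ oi) ++ M2.suf pi j ∈ L₃)) =
        (fun j => decide (o2 ++ M2.sufAux (some (pi, oi)) j ∈ L₃)) := by
      funext j; simp [sufAux, List.append_assoc]; exact decide_eq_decide.mpr Iff.rfl
    rw [← hfun]
    exact Bool.decide_coe _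

open Classical in
lemma comp_accepts (M1 : OracleMealy α β) (M2 : OracleMealy β γ)
    (L₂ : Set (List β)) (L₃ : Set (List γ))
    (hM2 : ∀ u, u ∈ L₂ ↔ M2.Accepts L₃ u) (w : List α) :
    M1.Accepts L₂ w ↔ (M1.comp M2).Accepts L₃ w := by
  have hc := comp_run M1 M2 w
  cases h1 : M1.run w with
  | none =>
    simp only [h1] at hc
    constructor
    · rintro ⟨pp, oo, hpo, -⟩; rw [h1] at hpo; simp at hpo
    · rintro ⟨pp, oo, hpo, -⟩; rw [hc] at hpo; simp at hpo
  | some po =>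
    obtain ⟨p, o₁⟩ := po
    simp only [h1] at hc
    cases h2 : M2.run o₁ with
    | none =>
      simp only [h2] at hc
      obtain ⟨o, ho⟩ := hc
      have hq : (fun i => decide (o₁ ++ M1.suf p i ∈ L₂)) =
          (fun _ : Fin (M1.numSuf p) => false) := by
        funext i
        simp only [decide_eq_false_iff_not]
        rw [hM2]
        rintro ⟨pp, oo, hpo, -⟩
        rw [run_append, h2] at hpo
        simp at hpo
      constructor
      · rintro ⟨pp, oo, hpo, htt⟩
        rw [h1] at hpo
        obtain ⟨rfl, rfl⟩ : p = pp ∧ o₁ = oo := by simpa [Prod.ext_iff] using hpo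
        refine ⟨(p, none), o, ho, ?_⟩
        rw [comp_tt_none, ← hq]
        exact htt
      · rintro ⟨pp, oo, hpo, htt⟩
        rw [ho] at hpo
        obtain ⟨rfl, rfl⟩ : ((p, none) : (M1.comp M2).Q) = pp ∧ o = oo := by
          exact ⟨congrArg Prod.fst (Option.some.inj hpo), congrArg Prod.snd (Option.some.inj hpo)⟩
        refine ⟨p, o₁, h1, ?_⟩
        rw [hq]
        rw [comp_tt_none] at htt
        exact htt
    | some q2o2 =>
      obtain ⟨q2, o2⟩ := q2o2
      simp only [h2] at hc
      have hq : (fun i => decide (o₁ ++ M1.suf p i ∈ L₂)) =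
          (fun i => M2.ttAux (M2.runFrom q2 (M1.suf p i))
            (fun j => decide (o2 ++ M2.sufAux (M2.runFrom q2 (M1.suf p i)) j ∈ L₃))) := by
        funext i; exact query_eq M2 L₂ L₃ hM2 h2 (M1.suf p i)
      have key : (M1.comp M2).tt (p, some q2)
            (fun j' => decide (o2 ++ (M1.comp M2).suf (p, some q2) j' ∈ L₃)) =
          M1.tt p (fun i => decide (o₁ ++ M1.suf p i ∈ L₂)) := by
        rw [comp_tt_some, hq]
        congr 1
        funext i
        congr 1
        funext j
        rw [comp_suf_some]
      constructor
      · rintro ⟨pp, oo, hpo, htt⟩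
        rw [h1] at hpo
        obtain ⟨rfl, rfl⟩ : p = pp ∧ o₁ = oo := by simpa [Prod.ext_iff] using hpo
        refine ⟨(p, some q2), o2, hc, ?_⟩
        rw [key]
        exact htt
      · rintro ⟨pp, oo, hpo, htt⟩
        rw [hc] at hpo
        obtain ⟨rfl, rfl⟩ : ((p, some q2) : (M1.comp M2).Q) = pp ∧ o2 = oo := by
          exact ⟨congrArg Prod.fst (Option.some.inj hpo), congrArg Prod.snd (Option.some.inj hpo)⟩
        refine ⟨p, o₁, h1, ?_⟩
        rw [← key]
        exact htt

end OracleMealy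

/-- Truth-table reducibility by Mealy machines is transitive. -/
theorem mealyTTReducible_trans
    {σ Δ Θ : Type} [Fintype σ] [Nonempty σ] [Fintype Δ] [Nonempty Δ] [Fintype Θ] [Nonempty Θ]
    (L₁ : Set (List σ)) (L₂ : Set (List Δ)) (L₃ : Set (List Θ))
    (h12 : MealyTTReducible L₁ L₂) (h23 : MealyTTReducible L₂ L₃) :
    MealyTTReducible L₁ L₃ := by
  obtain ⟨M1, hM1⟩ := h12
  obtain ⟨M2, hM2⟩ := h23
  exact ⟨M1.comp M2, fun w => (hM1 w).trans (M1.comp_accepts M2 L₂ L₃ hM2 w)⟩
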